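/- For a = 0 and b ∈ C_i^{(h,q^m)} (0 ≤ i ≤ h−1), the codeword c(0,b) of C_K has Hamming weight (2nq^{m_1−1}(q−1)/(q^m−1))·(q^m − 1 − h·η_i^{(h,q^m)}), where η_i^{(h,q^m)} is the Gaussian period of order h over F_{q^m}. -/

import Mathlib

open scoped Classical

/-- The codeword `c(a,b)` of the code `C_K` with `K = F_{q^{m_1}} × D`,
`D = {ω^{hi} : 0 ≤ i < n}`:
`c(a,b) = (Tr^{m_1}_1(ax)+Tr^m_1(by) | Tr^{m_1}_1(ax)+Tr^m_1((a+b)y))_{(x,y) ∈ K}`,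
indexed by `(x, i, half) ∈ E1 × Fin n × Bool` where `y = ω^{hi}`. -/
noncomputable def cword (Kq E1 E : Type*) [Field Kq] [Field E1] [Field E]
    [Algebra Kq E1] [Algebra Kq E] [Algebra E1 E]
    (ω : E) (h n : ℕ) (a : E1) (b : E) : E1 × Fin n × Bool → Kq :=
  fun z =>
    if z.2.2 then
      Algebra.trace Kq E1 (a * z.1) + Algebra.trace Kq E (b * ω ^ (h * (z.2.1 : ℕ)))
    else
      Algebra.trace Kq E1 (a * z.1) +
        Algebra.trace Kq E ((algebraMap E1 E a + b) * ω ^ (h * (z.2.1 : ℕ)))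

/-- The canonical additive character of a finite field of characteristic `p`. -/
noncomputable def canChar (p : ℕ) (F : Type*) [Field F] [Fintype F] [Algebra (ZMod p) F]
    (x : F) : ℂ :=
  Complex.exp (2 * Real.pi * Complex.I * ((Algebra.trace (ZMod p) F x).val : ℂ) / p)

/-- Gaussian period `η_i^{(N,q^m)}` of order `N` w.r.t. primitive element `α`. -/
noncomputable def gaussPeriod (p : ℕ) (F : Type*) [Field F] [Fintype F]
    [Algebra (ZMod p) F] (α : F) (N i : ℕ) : ℂ :=
  ∑ x : F, if ∃ k : ℕ, x = α ^ i * (α ^ N) ^ k then canChar p F x else 0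

/- ----------------- auxiliary material ----------------- -/

open Finset

/-- The basic character of `ZMod p`. -/
noncomputable def eChar (p : ℕ) (t : ZMod p) : ℂ :=
  Complex.exp (2 * Real.pi * Complex.I * ((t.val : ℕ) : ℂ) / p)

lemma eChar_natmod (p : ℕ) (hp : 0 < p) (x : ℕ) :
    Complex.exp (2 * Real.pi * Complex.I * ((x % p : ℕ) : ℂ) / p)
      = Complex.exp (2 * Real.pi * Complex.I * (x : ℂ) / p) := by
  have hp' : (p : ℂ) ≠ 0 := Nat.cast_ne_zero.mpr hp.ne'
  have hx : (x : ℂ) = ((x % p : ℕ) : ℂ) + p * ((x / p : ℕ) : ℂ) := by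
    exact_mod_cast congrArg (Nat.cast : ℕ → ℂ) (Nat.mod_add_div x p).symm
  have hsplit : 2 * Real.pi * Complex.I * (x : ℂ) / p
      = 2 * Real.pi * Complex.I * ((x % p : ℕ) : ℂ) / p
        + ((x / p : ℕ) : ℂ) * (2 * Real.pi * Complex.I) := by
    field_simp [hx]
    rw [hx]
  rw [hsplit, Complex.exp_add]
  have h1 : Complex.exp (((x / p : ℕ) : ℂ) * (2 * Real.pi * Complex.I)) = 1 := by
    have := Complex.exp_int_mul_two_pi_mul_I ((x / p : ℕ) : ℤ)
    simpa using this
  rw [h1, mul_one]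

lemma eChar_add (p : ℕ) [NeZero p] (a b : ZMod p) :
    eChar p (a + b) = eChar p a * eChar p b := by
  have hp : 0 < p := Nat.pos_of_ne_zero (NeZero.ne p)
  unfold eChar
  rw [ZMod.val_add, eChar_natmod p hp, ← Complex.exp_add]
  congr 1
  push_cast
  ring

lemma eChar_zero (p : ℕ) [NeZero p] : eChar p 0 = 1 := by
  unfold eChar
  simp [ZMod.val_zero]

lemma eChar_ne_one (p : ℕ) [hp : Fact p.Prime] {t : ZMod p} (ht : t ≠ 0) :
    eChar p t ≠ 1 := by
  have hppos : 0 < p := hp.out.pos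
  have hvpos : 0 < t.val := Nat.pos_of_ne_zero (fun h => ht ((ZMod.val_eq_zero t).mp h))
  have hvlt : t.val < p := ZMod.val_lt t
  intro hone
  rw [eChar, Complex.exp_eq_one_iff] at hone
  obtain ⟨k, hk⟩ := hone
  have hp' : (p : ℂ) ≠ 0 := Nat.cast_ne_zero.mpr hppos.ne'
  have h2pi : (2 * Real.pi * Complex.I : ℂ) ≠ 0 := by
    simp [Real.pi_ne_zero, Complex.I_ne_zero]
  have hv : ((t.val : ℕ) : ℂ) = (k : ℂ) * p := by
    have h' : 2 * Real.pi * Complex.I * ((t.val : ℕ) : ℂ)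
        = 2 * Real.pi * Complex.I * ((k : ℂ) * p) := by
      rw [div_eq_iff hp'] at hk
      rw [hk]; ring
    exact mul_left_cancel₀ h2pi h'
  have hz : ((t.val : ℕ) : ℤ) = k * p := by exact_mod_cast hv
  have hdvd : (p : ℤ) ∣ (t.val : ℤ) := ⟨k, by linarith [hz]⟩
  have hdvd' : p ∣ t.val := Int.ofNat_dvd.mp (by exact_mod_cast hdvd)
  have := Nat.le_of_dvd hvpos hdvd'
  omega

/-- Orthogonality: summing the character of `Tr(c*t)` over `c`. -/
lemma char_sum (p : ℕ) [hp : Fact p.Prime] (Kq : Type*) [Field Kq] [Fintype Kq]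
    [Algebra (ZMod p) Kq]
    (hnd : ∀ t : Kq, t ≠ 0 → ∃ c : Kq, Algebra.trace (ZMod p) Kq (c * t) ≠ 0)
    (t : Kq) :
    ∑ c : Kq, eChar p (Algebra.trace (ZMod p) Kq (c * t))
      = if t = 0 then (Fintype.card Kq : ℂ) else 0 := by
  haveI : NeZero p := ⟨hp.out.ne_zero⟩
  by_cases ht : t = 0
  · subst ht
    simp [eChar_zero]
  · rw [if_neg ht]
    obtain ⟨c0, hc0⟩ := hnd t ht
    set F : Kq → ℂ := fun c => eChar p (Algebra.trace (ZMod p) Kq (c * t)) with hF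
    have hFadd : ∀ c c' : Kq, F (c + c') = F c * F c' := by
      intro c c'
      simp only [hF]
      rw [add_mul, map_add, eChar_add]
    have hshift : ∑ c : Kq, F (c0 + c) = ∑ c : Kq, F c :=
      Fintype.sum_bijective _ (Equiv.addLeft c0).bijective _ _ (fun c => rfl)
    have hkey : F c0 * ∑ c : Kq, F c = ∑ c : Kq, F c := by
      conv_rhs => rw [← hshift]
      rw [Finset.mul_sum]
      exact Finset.sum_congr rfl (fun c _ => (hFadd c0 c).symm)
    have hne : F c0 ≠ 1 := eChar_ne_one p hc0
    by_contra hS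
    exact hne ((mul_eq_right₀ hS).mp hkey)

lemma periodic_shift {M : Type*} (f : ℕ → M) (e : ℕ) (hf : ∀ j, f (j + e) = f j) :
    ∀ k j, f (j + k * e) = f j := by
  intro k
  induction k with
  | zero => simp
  | succ k ih =>
    intro j
    have : j + (k + 1) * e = (j + k * e) + e := by ring
    rw [this, hf, ih]

lemma periodic_sum {M : Type*} [AddCommMonoid M] (f : ℕ → M) (e : ℕ)
    (hf : ∀ j, f (j + e) = f j) (k : ℕ) :
    ∑ j ∈ range (k * e), f j = k • ∑ j ∈ range e, f j := by
  induction k with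
  | zero => simp
  | succ k ih =>
    have hsp : (k + 1) * e = k * e + e := by ring
    rw [hsp, Finset.sum_range_add, ih, succ_nsmul]
    congr 1
    exact Finset.sum_congr rfl (fun j _ => by
      rw [add_comm (k * e) j, periodic_shift f e hf])

lemma periodic_count (P : ℕ → Prop) [DecidablePred P] (e : ℕ)
    (hP : ∀ j, P (j + e) ↔ P j) (k : ℕ) :
    ((range (k * e)).filter P).card = k * ((range e).filter P).card := by
  have h1 : ∀ s : Finset ℕ, (s.filter P).card = ∑ j ∈ s, (if P j then 1 else 0) := by
    intro s; rw [Finset.card_filter]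
  rw [h1, h1, periodic_sum (fun j => if P j then 1 else 0) e
    (fun j => by simp [hP j]) k, smul_eq_mul]

/-- Shifting the exponent by `s` permutes the powers. -/
lemma sum_pow_shift {E : Type*} [Monoid E] (x : E) (hd : 0 < orderOf x) (s : ℕ)
    (g : E → ℂ) :
    ∑ j ∈ range (orderOf x), g (x ^ (s + j)) = ∑ j ∈ range (orderOf x), g (x ^ j) := by
  set d := orderOf x with hdd
  have hinj : ∀ j1 ∈ range d, ∀ j2 ∈ range d, (s + j1) % d = (s + j2) % d → j1 = j2 := by
    intro j1 h1 j2 h2 hmod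
    rw [mem_range] at h1 h2
    have : j1 ≡ j2 [MOD d] := Nat.ModEq.add_left_cancel' s hmod
    rwa [Nat.ModEq, Nat.mod_eq_of_lt h1, Nat.mod_eq_of_lt h2] at this
  have himg : (range d).image (fun j => (s + j) % d) = range d := by
    apply Finset.eq_of_subset_of_card_le
    · intro j hj
      rw [Finset.mem_image] at hj
      obtain ⟨j', _, rfl⟩ := hj
      exact mem_range.mpr (Nat.mod_lt _ hd)
    · rw [Finset.card_image_of_injOn (fun a ha b hb => hinj a ha b hb)]
  calc ∑ j ∈ range d, g (x ^ (s + j))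
      = ∑ j ∈ range d, g (x ^ ((s + j) % d)) := by
        refine Finset.sum_congr rfl (fun j _ => ?_)
        rw [pow_mod_orderOf]
    _ = ∑ j ∈ (range d).image (fun j => (s + j) % d), g (x ^ j) :=
        (Finset.sum_image (f := fun k => g (x ^ k)) (g := fun j => (s + j) % d) hinj).symm
    _ = ∑ j ∈ range d, g (x ^ j) := by rw [himg]

/-- For `a = 0` and `b ∈ C_i^{(h,q^m)}`, the codeword `c(0,b)` has Hamming weight
`(2nq^{m_1−1}(q−1)/(q^m−1))·(q^m − 1 − h·η_i^{(h,q^m)})`. -/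
theorem stmt8 (p sp q m m1 h n : ℕ) (hp : p.Prime) (hpodd : Odd p)
    (Kq E1 E : Type*)
    [Field Kq] [Fintype Kq] [DecidableEq Kq]
    [Field E1] [Fintype E1] [Field E] [Fintype E] [Algebra (ZMod p) E]
    [Algebra Kq E1] [Algebra Kq E] [Algebra E1 E] [IsScalarTower Kq E1 E]
    (hq : q = Fintype.card Kq) (hqp : q = p ^ sp) (hsp : 0 < sp)
    (hm1 : m1 ∣ m) (hc1 : Fintype.card E1 = q ^ m1) (hc : Fintype.card E = q ^ m)
    (ω : E) (hω : ∀ x : E, x ≠ 0 → ∃ k : ℕ, x = ω ^ k)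
    (hh0 : 0 < h) (hh : h ∣ (q ^ m - 1) / (q - 1))
    (hn0 : 0 < n) (hn : (q ^ m - 1) / (h * (q - 1)) ∣ n) :
    ∀ i : ℕ, i < h → ∀ b : E, (∃ k : ℕ, b = ω ^ i * (ω ^ h) ^ k) →
      (hammingNorm (cword Kq E1 E ω h n 0 b) : ℂ) =
        (2 * n * (q : ℂ) ^ (m1 - 1) * ((q : ℂ) - 1)) / ((q : ℂ) ^ m - 1) *
          ((q : ℂ) ^ m - 1 - (h : ℂ) * gaussPeriod p E ω h i) := by
  intro i hi b hb
  haveI : Fact p.Prime := ⟨hp⟩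
  haveI : NeZero p := ⟨hp.ne_zero⟩
  -- characteristic bookkeeping
  haveI : CharP E p := charP_of_injective_algebraMap (algebraMap (ZMod p) E).injective p
  haveI : CharP Kq p := (algebraMap Kq E).charP (algebraMap Kq E).injective p
  have hrc : ringChar Kq = p := ringChar.eq Kq p
  subst hrc
  letI : Algebra (ZMod (ringChar Kq)) Kq := ZMod.algebra Kq (ringChar Kq)
  haveI : IsScalarTower (ZMod (ringChar Kq)) Kq E := IsScalarTower.of_algebraMap_eq
    (fun c => RingHom.congr_fun
      (RingHom.ext_zmod (algebraMap (ZMod (ringChar Kq)) E)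
        ((algebraMap Kq E).comp (algebraMap (ZMod (ringChar Kq)) Kq))) c)
  -- basic numeric facts
  have hp3 : 3 ≤ ringChar Kq := by
    have h2 := hp.two_le
    rcases hpodd with ⟨t, ht⟩
    omega
  have hq3 : 3 ≤ q := by
    rw [hqp]
    calc 3 ≤ ringChar Kq := hp3
      _ ≤ ringChar Kq ^ sp := Nat.le_self_pow hsp.ne' _
  have hq1 : 1 < q := by omega
  have hm : 0 < m := by
    rcases Nat.eq_zero_or_pos m with hm0 | hm0
    · have h1 : 1 < Fintype.card E := Fintype.one_lt_card
      rw [hc, hm0, pow_zero] at h1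
      omega
    · exact hm0
  have hm1pos : 0 < m1 := by
    rcases Nat.eq_zero_or_pos m1 with hm0 | hm0
    · have h1 : 1 < Fintype.card E1 := Fintype.one_lt_card
      rw [hc1, hm0, pow_zero] at h1
      omega
    · exact hm0
  set D' := q ^ m - 1 with hD'
  have hqm1 : q ≤ q ^ m := Nat.le_self_pow hm.ne' q
  have hD'pos : 0 < D' := by omega
  have hq1D : (q - 1) ∣ D' := by
    simpa using Nat.sub_dvd_pow_sub_pow q 1 m
  have hhD2 : h * (q - 1) ∣ D' := by
    have h' := (Nat.dvd_div_iff_mul_dvd hq1D).mp hh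
    rwa [mul_comm (q - 1) h] at h'
  have hhD : h ∣ D' := dvd_trans (dvd_mul_right h (q - 1)) hhD2
  set d := D' / h with hd
  set e := D' / (h * (q - 1)) with he
  have hhd : h * d = D' := Nat.mul_div_cancel' hhD
  have hq2 : 0 < q - 1 := by omega
  have hq1d : (q - 1) ∣ d := by
    rw [hd]
    exact (Nat.dvd_div_iff_mul_dvd hhD).mpr hhD2
  have hde : d = e * (q - 1) := by
    have h1 : e = d / (q - 1) := by rw [he, hd, Nat.div_div_eq_div_mul]
    rw [h1, Nat.div_mul_cancel hq1d]
  have hdpos : 0 < d := Nat.div_pos (Nat.le_of_dvd hD'pos hhD) hh0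
  have hepos : 0 < e := by
    rcases Nat.eq_zero_or_pos e with h0 | h0
    · rw [h0, zero_mul] at hde; omega
    · exact h0
  have hheq1 : h * e * (q - 1) = D' := by rw [mul_assoc, ← hde, hhd]
  -- primitive element facts
  have hcard3 : 3 ≤ Fintype.card E := by
    rw [hc]; omega
  have hω0 : ω ≠ 0 := by
    intro hω0
    have hsub : (univ : Finset E) ⊆ {0, 1} := by
      intro x _
      by_cases hx : x = 0
      · simp [hx]
      · obtain ⟨k, hk⟩ := hω x hx
        rcases Nat.eq_zero_or_pos k with hk0 | hk0
        · subst hk0; simp [hk]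
        · exfalso; apply hx; rw [hk, hω0, zero_pow hk0.ne']
    have hle := Finset.card_le_card hsub
    have h2 : ({0, 1} : Finset E).card ≤ 2 :=
      (Finset.card_insert_le _ _).trans (by simp)
    rw [Finset.card_univ] at hle
    omega
  have hωD : ω ^ D' = 1 := by
    have := FiniteField.pow_card_sub_one_eq_one ω hω0
    rwa [hc] at this
  have hfin : IsOfFinOrder ω := isOfFinOrder_iff_pow_eq_one.mpr ⟨D', hD'pos, hωD⟩
  have hordpos : 0 < orderOf ω := hfin.orderOf_pos
  have hord : orderOf ω = D' := by
    have h1 : orderOf ω ∣ D' := orderOf_dvd_of_pow_eq_one hωD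
    have h2 : D' ≤ orderOf ω := by
      have hsub : (univ.filter (fun x : E => x ≠ 0))
          ⊆ (range (orderOf ω)).image (fun k => ω ^ k) := by
        intro x hx
        rw [Finset.mem_filter] at hx
        obtain ⟨k, hk⟩ := hω x hx.2
        rw [Finset.mem_image]
        exact ⟨k % orderOf ω, Finset.mem_range.mpr (Nat.mod_lt _ hordpos),
          by rw [pow_mod_orderOf, ← hk]⟩
      have hcardf : (univ.filter (fun x : E => x ≠ 0)).card = D' := by
        rw [Finset.filter_ne' univ (0 : E), Finset.card_erase_of_mem (Finset.mem_univ _),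
          Finset.card_univ, hc]
      calc D' = (univ.filter (fun x : E => x ≠ 0)).card := hcardf.symm
        _ ≤ ((range (orderOf ω)).image (fun k => ω ^ k)).card := Finset.card_le_card hsub
        _ ≤ (range (orderOf ω)).card := Finset.card_image_le
        _ = orderOf ω := Finset.card_range _
    exact Nat.le_antisymm (Nat.le_of_dvd hD'pos h1) h2
  have hordh : orderOf (ω ^ h) = d := by
    rw [orderOf_pow' ω hh0.ne', hord, Nat.gcd_eq_right hhD, hd]
  -- the subfield-membership lemma
  have hKimg : ∀ x : E, x ^ (q - 1) = 1 → ∃ u : Kq, u ≠ 0 ∧ algebraMap Kq E u = x := by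
    intro x hx
    have hT : x ∈ Polynomial.nthRootsFinset (q - 1) (1 : E) :=
      (Polynomial.mem_nthRootsFinset hq2 1).mpr hx
    set F : Finset E := (univ.filter (fun u : Kq => u ≠ 0)).image (algebraMap Kq E) with hF
    have hFT : F ⊆ Polynomial.nthRootsFinset (q - 1) (1 : E) := by
      intro y hy
      rw [hF, Finset.mem_image] at hy
      obtain ⟨u, hu, rfl⟩ := hy
      rw [Finset.mem_filter] at hu
      rw [Polynomial.mem_nthRootsFinset hq2 1, ← map_pow]
      have hu1 : u ^ (q - 1) = 1 := by
        have := FiniteField.pow_card_sub_one_eq_one u hu.2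
        rwa [← hq] at this
      rw [hu1, map_one]
    have hcardF : F.card = q - 1 := by
      rw [hF, Finset.card_image_of_injective _ (algebraMap Kq E).injective,
        Finset.filter_ne' univ (0 : Kq), Finset.card_erase_of_mem (Finset.mem_univ _),
        Finset.card_univ, ← hq]
    have hcardT : (Polynomial.nthRootsFinset (q - 1) (1 : E)).card ≤ q - 1 :=
      (Multiset.toFinset_card_le _).trans (Polynomial.card_nthRoots _ _)
    have hFeq : F = Polynomial.nthRootsFinset (q - 1) (1 : E) :=
      Finset.eq_of_subset_of_card_le hFT (by rw [hcardF]; exact hcardT)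
    rw [← hFeq, hF, Finset.mem_image] at hT
    obtain ⟨u, hu, hux⟩ := hT
    rw [Finset.mem_filter] at hu
    exact ⟨u, hu.2, hux⟩
  obtain ⟨uE, huE0, huE⟩ : ∃ u : Kq, u ≠ 0 ∧ algebraMap Kq E u = ω ^ (h * e) := by
    apply hKimg
    rw [← pow_mul, hheq1, hωD]
  have htr_smul : ∀ (u : Kq) (z : E),
      Algebra.trace Kq E (algebraMap Kq E u * z) = u * Algebra.trace Kq E z := by
    intro u z
    rw [← Algebra.smul_def, map_smul, smul_eq_mul]
  obtain ⟨k0, hb0eq⟩ := hb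
  have hbne : b ≠ 0 := by
    rw [hb0eq]
    exact mul_ne_zero (pow_ne_zero _ hω0) (pow_ne_zero _ (pow_ne_zero _ hω0))
  -- the trace values and periodicity
  set tj : ℕ → Kq := fun j => Algebra.trace Kq E (b * ω ^ (h * j)) with htj
  set P : ℕ → Prop := fun j => tj j ≠ 0 with hPdef
  have hper : ∀ j, P (j + e) ↔ P j := by
    intro j
    have hrw : b * ω ^ (h * (j + e)) = algebraMap Kq E uE * (b * ω ^ (h * j)) := by
      rw [huE, Nat.mul_add, pow_add]; ring
    simp only [hPdef, htj, hrw, htr_smul]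
    constructor
    · intro hne h0
      exact hne (by rw [h0, mul_zero])
    · exact fun hne => mul_ne_zero huE0 hne
  -- Hamming weight reduction
  set M := ((range e).filter P).card with hM
  set N := ((range n).filter P).card with hN
  have hcw : ∀ z : E1 × Fin n × Bool, cword Kq E1 E ω h n 0 b z = tj (z.2.1 : ℕ) := by
    intro z
    rcases z with ⟨x, i', bb⟩
    cases bb <;> simp [cword, htj]
  have hNfin : (univ.filter (fun i' : Fin n => P (i' : ℕ))).card = N := by
    rw [hN]
    apply Finset.card_bij (fun (i' : Fin n) _ => (i' : ℕ))
    · intro a ha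
      rw [Finset.mem_filter] at ha ⊢
      exact ⟨Finset.mem_range.mpr a.isLt, ha.2⟩
    · intro a1 h1 a2 h2 h12
      exact Fin.val_injective h12
    · intro j hj
      rw [Finset.mem_filter, Finset.mem_range] at hj
      exact ⟨⟨j, hj.1⟩, by rw [Finset.mem_filter]; exact ⟨Finset.mem_univ _, hj.2⟩, rfl⟩
  have hham : hammingNorm (cword Kq E1 E ω h n 0 b) = Fintype.card E1 * (2 * N) := by
    have h0 : hammingNorm (cword Kq E1 E ω h n 0 b)
        = (univ.filter (fun z : E1 × Fin n × Bool =>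
            cword Kq E1 E ω h n 0 b z ≠ 0)).card := rfl
    rw [h0]
    have hfe : (univ.filter (fun z : E1 × Fin n × Bool => cword Kq E1 E ω h n 0 b z ≠ 0))
        = univ.filter (fun z : E1 × Fin n × Bool => P (z.2.1 : ℕ)) := by
      apply Finset.filter_congr
      intro z _
      rw [hcw z]
    rw [hfe, Finset.card_filter, Fintype.sum_prod_type]
    have hinner : ∀ x : E1, (∑ y : Fin n × Bool, if P (y.1 : ℕ) then (1:ℕ) else 0)
        = 2 * N := by
      intro x
      rw [Fintype.sum_prod_type]
      have hb2 : ∀ i' : Fin n, (∑ bb : Bool, if P (i' : ℕ) then (1:ℕ) else 0)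
          = 2 * (if P (i' : ℕ) then (1:ℕ) else 0) := by
        intro i'
        rw [Finset.sum_const, Finset.card_univ]
        simp [two_mul]
      rw [Finset.sum_congr rfl (fun i' _ => hb2 i'), ← Finset.mul_sum,
        ← Finset.card_filter, hNfin]
    rw [Finset.sum_congr rfl (fun x _ => hinner x), Finset.sum_const, Finset.card_univ,
      smul_eq_mul]
  have hNM : N = (n / e) * M := by
    have hne' : n = (n / e) * e := (Nat.div_mul_cancel hn).symm
    rw [hN, hM]
    conv_lhs => rw [hne']
    exact periodic_count P e hper (n / e)
  have hdM : ((range d).filter P).card = (q - 1) * M := by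
    have hd' : d = (q - 1) * e := by rw [hde, mul_comm]
    rw [hd', hM]
    exact periodic_count P e hper (q - 1)
  set Z := ((range d).filter (fun j => tj j = 0)).card with hZ
  have hZM : Z + (q - 1) * M = d := by
    have hsplit := Finset.card_filter_add_card_filter_not
      (s := range d) (p := fun j => tj j = 0)
    simp only [Finset.card_range] at hsplit
    have hPeq : ((range d).filter (fun j => ¬ tj j = 0)).card
        = ((range d).filter P).card := by
      congr 1
    rw [hPeq, hdM] at hsplit
    omega
  -- nondegeneracy of the trace
  have hnd : ∀ t : Kq, t ≠ 0 → ∃ c : Kq, Algebra.trace (ZMod (ringChar Kq)) Kq (c * t) ≠ 0 := by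
    intro t ht
    obtain ⟨c, hcc⟩ := FiniteField.trace_to_zmod_nondegenerate Kq ht
    exact ⟨c, by rwa [mul_comm] at hcc⟩
  have hcanE : ∀ x : E, canChar (ringChar Kq) E x = eChar (ringChar Kq) (Algebra.trace (ZMod (ringChar Kq)) E x) :=
    fun _ => rfl
  have hψ : ∀ (c : Kq) (z : E), canChar (ringChar Kq) E (algebraMap Kq E c * z)
      = eChar (ringChar Kq) (Algebra.trace (ZMod (ringChar Kq)) Kq (c * Algebra.trace Kq E z)) := by
    intro c z
    rw [hcanE, ← Algebra.trace_trace (S := Kq), htr_smul]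
  have hψ0 : canChar (ringChar Kq) E 0 = 1 := by
    rw [hcanE, map_zero, eChar_zero]
  -- Gaussian period as a sum over the coset
  have hinjd : ∀ j1 ∈ range d, ∀ j2 ∈ range d,
      b * ω ^ (h * j1) = b * ω ^ (h * j2) → j1 = j2 := by
    intro j1 h1 j2 h2 heq
    have heq' : (ω ^ h) ^ j1 = (ω ^ h) ^ j2 := by
      rw [← pow_mul, ← pow_mul]
      exact mul_left_cancel₀ hbne heq
    refine pow_injOn_Iio_orderOf ?_ ?_ heq'
    · rw [Set.mem_Iio, hordh]; exact Finset.mem_range.mp h1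
    · rw [Set.mem_Iio, hordh]; exact Finset.mem_range.mp h2
  have hCset : (univ.filter (fun x : E => ∃ k : ℕ, x = ω ^ i * (ω ^ h) ^ k))
      = (range d).image (fun j => b * ω ^ (h * j)) := by
    ext x
    simp only [Finset.mem_filter, Finset.mem_image, Finset.mem_range, Finset.mem_univ,
      true_and]
    constructor
    · rintro ⟨k, rfl⟩
      set r := k0 % d with hr
      have hrlt : r < d := Nat.mod_lt _ hdpos
      have hrk : r ≤ k0 := Nat.mod_le _ _
      refine ⟨(k + d - r) % d, Nat.mod_lt _ hdpos, ?_⟩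
      have hmod : k0 + (k + d - r) % d ≡ k [MOD d] := by
        have h1 : (k + d - r) % d ≡ k + d - r [MOD d] := Nat.mod_modEq _ _
        have h2 : k0 + ((k + d - r) % d) ≡ k0 + (k + d - r) [MOD d] :=
          Nat.ModEq.add_left _ h1
        have h3 : r + d * (k0 / d) = k0 := Nat.mod_add_div k0 d
        have h4 : k0 - r = d * (k0 / d) := by omega
        have hdiv : d ∣ d + (k0 - r) := dvd_add dvd_rfl ⟨k0 / d, h4⟩
        have hsplit : k0 + (k + d - r) = k + (d + (k0 - r)) := by omega
        have h5 : k + (d + (k0 - r)) ≡ k + 0 [MOD d] :=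
          Nat.ModEq.add_left k (Nat.modEq_zero_iff_dvd.mpr hdiv)
        calc k0 + (k + d - r) % d ≡ k0 + (k + d - r) [MOD d] := h2
          _ = k + (d + (k0 - r)) := hsplit
          _ ≡ k + 0 [MOD d] := h5
          _ = k := by rw [add_zero]
      have hpow : (ω ^ h) ^ (k0 + (k + d - r) % d) = (ω ^ h) ^ k := by
        have e1 := pow_mod_orderOf (ω ^ h) (k0 + (k + d - r) % d)
        have e2 := pow_mod_orderOf (ω ^ h) k
        rw [← e1, ← e2, hordh]
        exact congrArg (fun z : ℕ => (ω ^ h) ^ z) hmod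
      rw [hb0eq]
      calc ω ^ i * (ω ^ h) ^ k0 * ω ^ (h * ((k + d - r) % d))
          = ω ^ i * (ω ^ h) ^ (k0 + (k + d - r) % d) := by
            rw [pow_mul, mul_assoc, ← pow_add]
        _ = ω ^ i * (ω ^ h) ^ k := by rw [hpow]
    · rintro ⟨j, hj, rfl⟩
      exact ⟨k0 + j, by rw [hb0eq, pow_add, pow_mul, mul_assoc]⟩
  have hη : gaussPeriod (ringChar Kq) E ω h i = ∑ j ∈ range d, canChar (ringChar Kq) E (b * ω ^ (h * j)) := by
    have h1 : gaussPeriod (ringChar Kq) E ω h i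
        = ∑ x ∈ univ.filter (fun x : E => ∃ k : ℕ, x = ω ^ i * (ω ^ h) ^ k),
            canChar (ringChar Kq) E x := by
      rw [Finset.sum_filter]
      rfl
    rw [h1, hCset,
      Finset.sum_image (f := fun x => canChar (ringChar Kq) E x) (g := fun j => b * ω ^ (h * j)) hinjd]
  -- the double character sum, two ways
  have hq' : Fintype.card Kq = q := hq.symm
  have hdouble1 : ∑ c : Kq, ∑ j ∈ range d,
      canChar (ringChar Kq) E (algebraMap Kq E c * (b * ω ^ (h * j)))
      = (Z : ℂ) * (q : ℂ) := by
    rw [Finset.sum_comm]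
    have hstep : ∀ j ∈ range d, (∑ c : Kq,
        canChar (ringChar Kq) E (algebraMap Kq E c * (b * ω ^ (h * j))))
        = if tj j = 0 then (q : ℂ) else 0 := by
      intro j _
      calc ∑ c : Kq, canChar (ringChar Kq) E (algebraMap Kq E c * (b * ω ^ (h * j)))
          = ∑ c : Kq, eChar (ringChar Kq) (Algebra.trace (ZMod (ringChar Kq)) Kq (c * tj j)) :=
            Finset.sum_congr rfl (fun c _ => hψ c _)
        _ = if tj j = 0 then (Fintype.card Kq : ℂ) else 0 := by
            convert char_sum (ringChar Kq) Kq hnd (tj j) using 2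
        _ = if tj j = 0 then (q : ℂ) else 0 := by rw [hq']
    rw [Finset.sum_congr rfl hstep, Finset.sum_ite, Finset.sum_const,
      Finset.sum_const_zero, add_zero, hZ, nsmul_eq_mul]
  have hdouble2 : ∑ c : Kq, ∑ j ∈ range d,
      canChar (ringChar Kq) E (algebraMap Kq E c * (b * ω ^ (h * j)))
      = (d : ℂ) + ((q : ℂ) - 1) * gaussPeriod (ringChar Kq) E ω h i := by
    rw [← Finset.add_sum_erase _ _ (Finset.mem_univ (0 : Kq))]
    congr 1
    · rw [map_zero]
      have : ∀ j ∈ range d, canChar (ringChar Kq) E ((0 : E) * (b * ω ^ (h * j))) = 1 := by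
        intro j _
        rw [zero_mul, hψ0]
      rw [Finset.sum_congr rfl this, Finset.sum_const, Finset.card_range, nsmul_eq_mul,
        mul_one]
    · have hηc : ∀ c ∈ (univ : Finset Kq).erase 0,
          (∑ j ∈ range d, canChar (ringChar Kq) E (algebraMap Kq E c * (b * ω ^ (h * j))))
          = gaussPeriod (ringChar Kq) E ω h i := by
        intro c hcmem
        have hc0 : c ≠ 0 := (Finset.mem_erase.mp hcmem).1
        have hc'0 : algebraMap Kq E c ≠ 0 := fun hx =>
          hc0 ((algebraMap Kq E).injective (by rw [hx, map_zero]))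
        obtain ⟨s, hs⟩ := hω _ hc'0
        have hsD : ω ^ (s * (q - 1)) = 1 := by
          rw [pow_mul, ← hs, ← map_pow]
          have hcq : c ^ (q - 1) = 1 := by
            rw [hq]; exact FiniteField.pow_card_sub_one_eq_one c hc0
          rw [hcq, map_one]
        have hdvd : D' ∣ s * (q - 1) := hord ▸ orderOf_dvd_of_pow_eq_one hsD
        have hdvd2 : h * e ∣ s := by
          have h1 : (h * e) * (q - 1) ∣ s * (q - 1) := by rw [hheq1]; exact hdvd
          exact (Nat.mul_dvd_mul_iff_right hq2).mp h1
        obtain ⟨t, ht⟩ := hdvd2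
        have hrw : ∀ j : ℕ, algebraMap Kq E c * (b * ω ^ (h * j))
            = b * (ω ^ h) ^ (e * t + j) := by
          intro j
          rw [hs, ht, pow_add, ← pow_mul, ← pow_mul, mul_assoc h e t]
          ring
        calc (∑ j ∈ range d, canChar (ringChar Kq) E (algebraMap Kq E c * (b * ω ^ (h * j))))
            = ∑ j ∈ range d, (fun y => canChar (ringChar Kq) E (b * y)) ((ω ^ h) ^ (e * t + j)) :=
              Finset.sum_congr rfl (fun j _ => by rw [hrw j])
          _ = ∑ j ∈ range d, (fun y => canChar (ringChar Kq) E (b * y)) ((ω ^ h) ^ j) := by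
              have hshift := sum_pow_shift (ω ^ h) (by rw [hordh]; exact hdpos) (e * t)
                (fun y => canChar (ringChar Kq) E (b * y))
              rw [hordh] at hshift
              exact hshift
          _ = gaussPeriod (ringChar Kq) E ω h i := by
              rw [hη]
              exact Finset.sum_congr rfl (fun j _ => by rw [← pow_mul])
      rw [Finset.sum_congr rfl hηc, Finset.sum_const,
        Finset.card_erase_of_mem (Finset.mem_univ _), Finset.card_univ, hq',
        nsmul_eq_mul]
      congr 1
      push_cast [Nat.cast_sub hq1.le]
      ring
  -- assemble
  set η := gaussPeriod (ringChar Kq) E ω h i with hηdef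
  have hchar : (Z : ℂ) * (q : ℂ) = (d : ℂ) + ((q : ℂ) - 1) * η := by
    rw [← hdouble1, hdouble2]
  have hq1c : ((q - 1 : ℕ) : ℂ) = (q : ℂ) - 1 := by
    push_cast [Nat.cast_sub hq1.le]; ring
  have hZc : (Z : ℂ) = (d : ℂ) - ((q : ℂ) - 1) * (M : ℂ) := by
    have hcast := congrArg (Nat.cast : ℕ → ℂ) hZM
    push_cast [Nat.cast_sub hq1.le] at hcast
    linear_combination hcast
  have hQ1 : ((q : ℂ) - 1) ≠ 0 := by
    rw [← hq1c]
    exact Nat.cast_ne_zero.mpr (by omega)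
  have hA5 : (q : ℂ) * (M : ℂ) = (d : ℂ) - η := by
    apply mul_left_cancel₀ hQ1
    linear_combination (q : ℂ) * hZc - hchar
  have hDc : ((D' : ℕ) : ℂ) = (q : ℂ) ^ m - 1 := by
    rw [hD']
    push_cast [Nat.cast_sub (Nat.one_le_of_lt (by omega : 1 < q ^ m))]
    ring
  have hQmne : ((q : ℂ) ^ m - 1) ≠ 0 := by
    rw [← hDc]
    exact Nat.cast_ne_zero.mpr hD'pos.ne'
  have hA4 : (h : ℂ) * (d : ℂ) = (q : ℂ) ^ m - 1 := by
    rw [← hDc]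
    exact_mod_cast congrArg (Nat.cast : ℕ → ℂ) hhd
  have hA3 : (d : ℂ) = (e : ℂ) * ((q : ℂ) - 1) := by
    have := congrArg (Nat.cast : ℕ → ℂ) hde
    push_cast [Nat.cast_sub hq1.le] at this
    linear_combination this
  have hA2 : ((n / e : ℕ) : ℂ) * (e : ℂ) = (n : ℂ) := by
    exact_mod_cast congrArg (Nat.cast : ℕ → ℂ) (Nat.div_mul_cancel hn)
  have hA1 : (q : ℂ) ^ m1 = (q : ℂ) ^ (m1 - 1) * (q : ℂ) := by
    conv_lhs => rw [show m1 = (m1 - 1) + 1 by omega]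
    rw [pow_succ]
  have hη' : η = (d : ℂ) - (q : ℂ) * (M : ℂ) := by linear_combination hA5
  rw [hham, hNM, hc1]
  push_cast
  rw [div_mul_eq_mul_div, eq_div_iff hQmne, ← hA4, hA1, hη', hA3]
  linear_combination (2 * (q : ℂ) ^ (m1 - 1) * (q : ℂ) * (M : ℂ) * (h : ℂ)
    * ((q : ℂ) - 1)) * hA2
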